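/- Fix 1 ≤ ℓ < k ≤ K and assume that for every i with ℓ < i ≤ k there exists x ∈ S_i with p(x,S_{[0,ℓ]}) > 0. Define c*_ℓ = min_{ℓ<i≤k} min_{x∈S_i : p(x,S_{[0,ℓ]})>0} p(x,S_ℓ)/p(x,S_{[0,ℓ]}), and define recursively c*_{ℓ,ℓ} = 1 and, for j = ℓ+1, …, k, c*_{j,ℓ} = min_{x∈S_j} ( r(x,S_ℓ) + Σ_{i=ℓ+1}^{j−1} r(x,S_i) · c*_{i,ℓ} ). Then: (1) c*_{i,ℓ} ≥ c*_ℓ for every i with ℓ < i ≤ k; and (2) if for some i with ℓ < i ≤ k every x ∈ S_i satisfies p(x,S_{[0,ℓ]}) > 0 and min_{x∈S_i} p(x,S_ℓ)/p(x,S_{[0,ℓ]}) > c*_ℓ, then c*_{i,ℓ} > c*_ℓ. -/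
import Mathlib


open Finset

/-- A finite state space partitioned into fitness levels `S_0, …, S_K`
(`lev x = k` means `x ∈ S_k`), together with an elitist row-stochastic
transition matrix `p`. -/
structure LevelChain (S : Type*) [Fintype S] where
  /-- the number of non-optimal levels -/
  K : ℕ
  /-- the level of each state -/
  lev : S → ℕ
  one_le_K : 1 ≤ K
  lev_le : ∀ x, lev x ≤ K
  level_nonempty : ∀ k ≤ K, ∃ x, lev x = k
  /-- transition probabilities -/
  p : S → S → ℝ
  p_nonneg : ∀ x y, 0 ≤ p x y
  p_row_sum : ∀ x, ∑ y, p x y = 1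
  elitist : ∀ x y, lev x < lev y → p x y = 0

variable {S : Type*} [Fintype S]

/-- The fitness level `S_k`. -/
def LevelChain.level (c : LevelChain S) (k : ℕ) : Finset S :=
  Finset.univ.filter fun x => c.lev x = k

/-- The union of levels `S_{[i,j]} = S_i ∪ ⋯ ∪ S_j`. -/
def LevelChain.levels (c : LevelChain S) (i j : ℕ) : Finset S :=
  Finset.univ.filter fun x => i ≤ c.lev x ∧ c.lev x ≤ j

/-- `p(x, A) = Σ_{y ∈ A} p(x, y)`. -/
def LevelChain.pSet (c : LevelChain S) (x : S) (A : Finset S) : ℝ :=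
  ∑ y ∈ A, c.p x y

/-- The standing reachability assumption: from every non-optimal state one can
move to a better level with positive probability. -/
def LevelChain.Reachable (c : LevelChain S) : Prop :=
  ∀ k, 1 ≤ k → k ≤ c.K → ∀ x, c.lev x = k → 0 < c.pSet x (c.levels 0 (k - 1))

/-- Conditional transition probability `r(x, S_j)`:
`r(x,S_j) = p(x,S_j)/(1 − p(x,S_k))` for `j ≠ k = lev x`, and `r(x,S_k) = 0`. -/
noncomputable def LevelChain.r (c : LevelChain S) (x : S) (j : ℕ) : ℝ :=
  if j = c.lev x then 0
  else c.pSet x (c.level j) / (1 - c.pSet x (c.level (c.lev x)))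

/-- `r_min(X_k, S_j) = min_{x ∈ S_k} r(x, S_j)`. -/
noncomputable def LevelChain.rmin (c : LevelChain S) (k j : ℕ) : ℝ :=
  sInf ((fun x => c.r x j) '' {x | c.lev x = k})

/-- `r_max(X_k, S_j) = max_{x ∈ S_k} r(x, S_j)`. -/
noncomputable def LevelChain.rmax (c : LevelChain S) (k j : ℕ) : ℝ :=
  sSup ((fun x => c.r x j) '' {x | c.lev x = k})

/-- `m` is the mean hitting time of the optimal level `S_0`. -/
def LevelChain.IsMeanHittingTime (c : LevelChain S) (m : S → ℝ) : Prop :=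
  (∀ x, 0 ≤ m x) ∧
  (∀ x, c.lev x = 0 → m x = 0) ∧
  (∀ x, c.lev x ≠ 0 → m x = 1 + ∑ y, c.p x y * m y)

/-- `mbar` is the mean level-leaving time on `S ∖ S_0`. -/
def LevelChain.IsLevelLeavingTime (c : LevelChain S) (mbar : S → ℝ) : Prop :=
  (∀ x, c.lev x ≠ 0 → 0 ≤ mbar x) ∧
  (∀ x, c.lev x ≠ 0 → mbar x = 1 + ∑ y ∈ c.level (c.lev x), c.p x y * mbar y)

/-- `h ℓ x` is the probability of hitting level `S_ℓ` starting from `x`. -/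
def LevelChain.IsHitProb (c : LevelChain S) (h : ℕ → S → ℝ) : Prop :=
  (∀ ℓ x, 0 ≤ h ℓ x ∧ h ℓ x ≤ 1) ∧
  (∀ ℓ x, c.lev x = ℓ → h ℓ x = 1) ∧
  (∀ ℓ x, c.lev x < ℓ → h ℓ x = 0) ∧
  (∀ ℓ x, ℓ < c.lev x →
    h ℓ x = ∑ y ∈ c.levels ℓ (c.lev x), c.p x y * h ℓ y)
section Aux

variable {S : Type*} [Fintype S]

namespace LevelChain

lemma pSet_nonneg (c : LevelChain S) (x : S) (A : Finset S) : 0 ≤ c.pSet x A :=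
  Finset.sum_nonneg fun y _ => c.p_nonneg x y

lemma pSet_levels_eq_sum (c : LevelChain S) (x : S) (a b : ℕ) :
    c.pSet x (c.levels a b) = ∑ i ∈ Finset.Icc a b, c.pSet x (c.level i) := by
  classical
  unfold pSet
  rw [← Finset.sum_biUnion]
  · apply Finset.sum_congr _ (fun _ _ => rfl)
    ext y
    simp only [Finset.mem_biUnion, Finset.mem_Icc, levels, level, Finset.mem_filter,
      Finset.mem_univ, true_and]
    constructor
    · rintro ⟨h1, h2⟩; exact ⟨c.lev y, ⟨h1, h2⟩, rfl⟩
    · rintro ⟨i, hi, rfl⟩; exact hi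
  · intro i _ j _ hij
    simp only [Function.onFun, Finset.disjoint_left, level, Finset.mem_filter,
      Finset.mem_univ, true_and]
    intro y hy1 hy2
    exact hij (hy1 ▸ hy2 ▸ rfl)

lemma pSet_levels_lev (c : LevelChain S) (x : S) :
    c.pSet x (c.levels 0 (c.lev x)) = 1 := by
  unfold pSet
  rw [← c.p_row_sum x]
  apply Finset.sum_subset (Finset.subset_univ _)
  intro y _ hy
  simp only [levels, Finset.mem_filter, Finset.mem_univ, true_and, not_and, not_le,
    Nat.zero_le, forall_const] at hy
  exact c.elitist x y hy

lemma one_sub_pSet_level (c : LevelChain S) (x : S) (h1 : 1 ≤ c.lev x) :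
    1 - c.pSet x (c.level (c.lev x)) = c.pSet x (c.levels 0 (c.lev x - 1)) := by
  have h := c.pSet_levels_lev x
  rw [pSet_levels_eq_sum] at h
  obtain ⟨n, hn⟩ : ∃ n, c.lev x = n + 1 := ⟨c.lev x - 1, by omega⟩
  rw [hn] at h ⊢
  rw [pSet_levels_eq_sum]
  rw [Finset.sum_Icc_succ_top (Nat.zero_le _)] at h
  simp only [Nat.add_sub_cancel]
  linarith

end LevelChain
end Aux

/-- The best Type-`c_{k,ℓ}` lower-bound coefficients Pareto dominate
the best Type-`c_ℓ` coefficient: with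
`c*_ℓ = min_{ℓ<i≤k} min_{x∈S_i : p(x,S_{[0,ℓ]})>0} p(x,S_ℓ)/p(x,S_{[0,ℓ]})` and
`c*_{ℓ,ℓ} = 1`, `c*_{j,ℓ} = min_{x∈S_j}( r(x,S_ℓ) + Σ_{i=ℓ+1}^{j−1} r(x,S_i)·c*_{i,ℓ} )`,
we have (1) `c*_{i,ℓ} ≥ c*_ℓ` for all `ℓ < i ≤ k`, and (2) strict inequality at any `i`
where `min_{x∈S_i} p(x,S_ℓ)/p(x,S_{[0,ℓ]}) > c*_ℓ` (all `x ∈ S_i` having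
`p(x,S_{[0,ℓ]}) > 0`). -/
theorem best_typeCkl_dominates_typeCl_lower
    (c : LevelChain S) (hreach : c.Reachable)
    (ℓ k : ℕ) (hℓ : 1 ≤ ℓ) (hℓk : ℓ < k) (hk : k ≤ c.K)
    (hex : ∀ i, ℓ < i → i ≤ k → ∃ x, c.lev x = i ∧ 0 < c.pSet x (c.levels 0 ℓ))
    (clstar : ℝ)
    (hclstar : clstar =
      sInf ((fun x => c.pSet x (c.level ℓ) / c.pSet x (c.levels 0 ℓ)) ''
        {x | ℓ < c.lev x ∧ c.lev x ≤ k ∧ 0 < c.pSet x (c.levels 0 ℓ)}))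
    (cstar : ℕ → ℝ)
    (hcstardiag : cstar ℓ = 1)
    (hcstar : ∀ j, ℓ < j → j ≤ k → cstar j =
      sInf ((fun x => c.r x ℓ + ∑ i ∈ Finset.Ioo ℓ j, c.r x i * cstar i) ''
        {x | c.lev x = j})) :
    (∀ i, ℓ < i → i ≤ k → clstar ≤ cstar i) ∧
    (∀ i, ℓ < i → i ≤ k →
      (∀ x, c.lev x = i → 0 < c.pSet x (c.levels 0 ℓ)) →
      clstar < sInf ((fun x => c.pSet x (c.level ℓ) / c.pSet x (c.levels 0 ℓ)) ''
        {x | c.lev x = i}) →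
      clstar < cstar i) := by
  classical
  -- positivity of the denominator
  have hDpos : ∀ j (x : S), ℓ < j → j ≤ k → c.lev x = j →
      0 < c.pSet x (c.levels 0 (j - 1)) :=
    fun j x h1 h2 hx => hreach j (by omega) (le_trans h2 hk) x hx
  -- formula for r
  have hr_eq : ∀ j (x : S), ℓ < j → c.lev x = j → ∀ i, i ≠ j →
      c.r x i = c.pSet x (c.level i) / c.pSet x (c.levels 0 (j - 1)) := by
    intro j x h1 hx i hi
    rw [LevelChain.r, if_neg (by rw [hx]; exact hi),
      c.one_sub_pSet_level x (by omega), hx]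
  -- the core pointwise estimate
  have core : ∀ j, ℓ < j → j ≤ k → (∀ i ∈ Finset.Ioo ℓ j, clstar ≤ cstar i) →
      ∀ x : S, c.lev x = j → ∀ t : ℝ,
      t * c.pSet x (c.levels 0 ℓ) ≤ c.pSet x (c.level ℓ) →
      clstar + (t - clstar) *
          (c.pSet x (c.levels 0 ℓ) / c.pSet x (c.levels 0 (j - 1))) ≤
        c.r x ℓ + ∑ i ∈ Finset.Ioo ℓ j, c.r x i * cstar i := by
    intro j hj1 hj2 IH x hx t ht
    set D := c.pSet x (c.levels 0 (j - 1)) with hDdef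
    have hD : 0 < D := hDpos j x hj1 hj2 hx
    set P := c.pSet x (c.levels 0 ℓ) with hPdef
    have hQ : ∑ i ∈ Finset.Ioo ℓ j, c.pSet x (c.level i) = D - P := by
      have hIoo : Finset.Ioo ℓ j = Finset.Icc (ℓ + 1) (j - 1) := by
        ext i; simp only [Finset.mem_Ioo, Finset.mem_Icc]; omega
      have hsplit : Finset.Icc 0 (j - 1) = Finset.Icc 0 ℓ ∪ Finset.Icc (ℓ + 1) (j - 1) := by
        ext i; simp only [Finset.mem_Icc, Finset.mem_union]; omega
      have hdisj : Disjoint (Finset.Icc 0 ℓ) (Finset.Icc (ℓ + 1) (j - 1)) := by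
        rw [Finset.disjoint_left]
        intro i hi1 hi2
        simp only [Finset.mem_Icc] at hi1 hi2; omega
      have hDP : D = P + ∑ i ∈ Finset.Icc (ℓ + 1) (j - 1), c.pSet x (c.level i) := by
        rw [hDdef, hPdef, c.pSet_levels_eq_sum, c.pSet_levels_eq_sum, hsplit,
          Finset.sum_union hdisj, ← c.pSet_levels_eq_sum]
      rw [hIoo]; linarith
    have hsum : clstar * ((D - P) / D) ≤ ∑ i ∈ Finset.Ioo ℓ j, c.r x i * cstar i := by
      rw [← hQ, Finset.sum_div, Finset.mul_sum]
      apply Finset.sum_le_sum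
      intro i hi
      have hiIoo := Finset.mem_Ioo.mp hi
      rw [hr_eq j x hj1 hx i (by omega)]
      have hrnn : 0 ≤ c.pSet x (c.level i) / D := div_nonneg (c.pSet_nonneg x _) hD.le
      calc clstar * (c.pSet x (c.level i) / D)
          ≤ cstar i * (c.pSet x (c.level i) / D) :=
            mul_le_mul_of_nonneg_right (IH i hi) hrnn
        _ = c.pSet x (c.level i) / D * cstar i := by ring
    have hrl : c.r x ℓ = c.pSet x (c.level ℓ) / D := hr_eq j x hj1 hx ℓ (by omega)
    have h1 : t * P / D ≤ c.pSet x (c.level ℓ) / D := by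
      gcongr
    have key : clstar + (t - clstar) * (P / D) = t * P / D + clstar * ((D - P) / D) := by
      field_simp; ring
    rw [key, hrl]
    linarith
  -- part 1 by strong induction
  have part1 : ∀ i, ℓ < i → i ≤ k → clstar ≤ cstar i := by
    intro i
    induction i using Nat.strong_induction_on with
    | _ i IH =>
      intro hi1 hi2
      rw [hcstar i hi1 hi2]
      apply le_csInf
      · obtain ⟨x, hx⟩ := c.level_nonempty i (le_trans hi2 hk)
        exact ⟨_, ⟨x, hx, rfl⟩⟩
      · rintro b ⟨x, hx, rfl⟩
        have hIH : ∀ i' ∈ Finset.Ioo ℓ i, clstar ≤ cstar i' := by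
          intro i' hi'
          have h := Finset.mem_Ioo.mp hi'
          exact IH i' h.2 h.1 (by omega)
        have ht : clstar * c.pSet x (c.levels 0 ℓ) ≤ c.pSet x (c.level ℓ) := by
          by_cases hP : 0 < c.pSet x (c.levels 0 ℓ)
          · have hcl : clstar ≤ c.pSet x (c.level ℓ) / c.pSet x (c.levels 0 ℓ) := by
              rw [hclstar]
              apply csInf_le
              · exact (Set.Finite.image _ (Set.toFinite _)).bddBelow
              · exact ⟨x, ⟨hx ▸ hi1, hx ▸ hi2, hP⟩, rfl⟩
            exact (le_div_iff₀ hP).mp hcl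
          · have hP0 : c.pSet x (c.levels 0 ℓ) = 0 :=
              le_antisymm (not_lt.mp hP) (c.pSet_nonneg x _)
            rw [hP0, mul_zero]
            exact c.pSet_nonneg x _
        have := core i hi1 hi2 hIH x hx clstar ht
        simpa using this
  refine ⟨part1, ?_⟩
  -- part 2
  intro i hi1 hi2 hall hstrict
  set m := sInf ((fun x => c.pSet x (c.level ℓ) / c.pSet x (c.levels 0 ℓ)) ''
    {x | c.lev x = i}) with hm
  rw [hcstar i hi1 hi2]
  have hfin : ((fun x => c.r x ℓ + ∑ i' ∈ Finset.Ioo ℓ i, c.r x i' * cstar i') ''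
      {x | c.lev x = i}).Finite := Set.Finite.image _ (Set.toFinite _)
  have hne : ((fun x => c.r x ℓ + ∑ i' ∈ Finset.Ioo ℓ i, c.r x i' * cstar i') ''
      {x | c.lev x = i}).Nonempty := by
    obtain ⟨x, hx⟩ := c.level_nonempty i (le_trans hi2 hk)
    exact ⟨_, ⟨x, hx, rfl⟩⟩
  obtain ⟨x, hx, hval⟩ := hne.csInf_mem hfin
  rw [← hval]
  dsimp only
  have hP : 0 < c.pSet x (c.levels 0 ℓ) := hall x hx
  have hmx : m ≤ c.pSet x (c.level ℓ) / c.pSet x (c.levels 0 ℓ) := by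
    rw [hm]
    apply csInf_le ((Set.Finite.image _ (Set.toFinite _)).bddBelow)
    exact ⟨x, hx, rfl⟩
  have ht : m * c.pSet x (c.levels 0 ℓ) ≤ c.pSet x (c.level ℓ) := (le_div_iff₀ hP).mp hmx
  have hIH : ∀ i' ∈ Finset.Ioo ℓ i, clstar ≤ cstar i' := by
    intro i' hi'
    have h := Finset.mem_Ioo.mp hi'
    exact part1 i' h.1 (by omega)
  have hcore := core i hi1 hi2 hIH x hx m ht
  have hD : 0 < c.pSet x (c.levels 0 (i - 1)) := hDpos i x hi1 hi2 hx
  have hpos : 0 < (m - clstar) *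
      (c.pSet x (c.levels 0 ℓ) / c.pSet x (c.levels 0 (i - 1))) := by
    apply mul_pos (by linarith [hstrict]) (div_pos hP hD)
  linarith
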